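/- Let (A,D) be a Γ-Cartan pair with expectation Δ, and for homogeneous normalizers n, n' and x ∈ X define (n,x) ∼_Σ (n',x') iff x = x' and there exist d, d' ∈ C_c(X) with d(x) > 0, d'(x) > 0 and nd = n'd'. Define (n,x) ≈_Σ (n',x') iff x = x' and Δ(n*n')(x) > 0. Then ∼_Σ and ≈_Σ coincide on 𝒢 = {(n,x) : n homogeneous normalizer, (n*n)(x) ≠ 0}. Similarly, the relation with d(x) ≠ 0, d'(x) ≠ 0 coincides with the relation Δ(n*n')(x) ≠ 0. -/

import Mathlib

open Filter Topology

private lemma gamma_cartan_char_bound {A : Type*} [NormedRing A] [StarRing A]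
    [NormedAlgebra ℂ A] [CompleteSpace A] [StarModule ℂ A]
    (D : StarSubalgebra ℂ A) (hDclosed : IsClosed (D : Set A)) (φ : A → ℂ)
    (hadd : ∀ d ∈ D, ∀ e ∈ D, φ (d + e) = φ d + φ e)
    (hsmul : ∀ (c : ℂ), ∀ d ∈ D, φ (c • d) = c * φ d)
    (hmul : ∀ d ∈ D, ∀ e ∈ D, φ (d * e) = φ d * φ e)
    {d : A} (hd : d ∈ D) : ‖φ d‖ ≤ ‖d‖ := by
  by_contra hlt
  push_neg at hlt
  have hφd : φ d ≠ 0 := by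
    intro h0
    rw [h0, norm_zero] at hlt
    exact (norm_nonneg d).not_gt hlt
  have h1 : (0:ℝ) < ‖φ d‖ := (norm_nonneg d).trans_lt hlt
  set c : A := (φ d)⁻¹ • d with hc_def
  have hcD : c ∈ D := D.smul_mem hd _
  have hφc : φ c = 1 := by
    rw [hc_def, hsmul _ _ hd, inv_mul_cancel₀ hφd]
  have hnc : ‖c‖ < 1 := by
    rw [hc_def, norm_smul, norm_inv, inv_mul_eq_div, div_lt_one h1]
    exact hlt
  have hsum : Summable (fun k : ℕ => c ^ (k + 1)) :=
    (summable_nat_add_iff 1).mpr (summable_geometric_of_norm_lt_one hnc)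
  set s : A := ∑' k : ℕ, c ^ (k + 1) with hs_def
  have hsD : s ∈ D := by
    rw [hs_def]
    refine hDclosed.mem_of_tendsto hsum.hasSum.tendsto_sum_nat
      (Eventually.of_forall fun N => ?_)
    exact sum_mem fun i _ => pow_mem hcD _
  have hrec : s = c + c * s := by
    conv_lhs => rw [hs_def, hsum.tsum_eq_zero_add]
    congr 1
    · rw [zero_add, pow_one]
    · rw [hs_def, ← hsum.tsum_mul_left c]
      congr 1
      funext k
      rw [← pow_succ']
  have hfs : φ s = 1 + φ s := by
    conv_lhs => rw [hrec]
    rw [hadd c hcD (c * s) (mul_mem hcD hsD), hmul c hcD s hsD, hφc, one_mul]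
  simp at hfs



set_option maxHeartbeats 2000000
set_option maxRecDepth 4000

/-- Let `(A,D)` be a `Γ`-Cartan pair with expectation `Δ`.  For homogeneous normalizers `n, n′` and `x ∈ X` with `(n*n)(x) ≠ 0 ≠ (n′*n′)(x)`, the germ relation `∼_Σ` (there are `d, d′ ∈ C_c(X)` with `d(x) > 0 < d′(x)` and `nd = n′d′`) coincides with the relation `≈_Σ` (`Δ(n*n′)(x) > 0`); similarly the version with `d(x) ≠ 0 ≠ d′(x)` coincides with `Δ(n*n′)(x) ≠ 0`. -/
theorem gamma_cartan_stmt12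
    {A : Type*} [NormedRing A] [StarRing A] [CStarRing A] [NormedAlgebra ℂ A]
    [CompleteSpace A] [StarModule ℂ A] [PartialOrder A] [StarOrderedRing A]
    {Γ : Type*} [AddCommGroup Γ]
    -- `A` is topologically graded by `Γ` (with linearly independent graded subspaces):
    (Agr : Γ → Submodule ℂ A)
    (hgr_closed : ∀ t, IsClosed (Agr t : Set A))
    (hgr_mul : ∀ s t : Γ, ∀ a ∈ Agr t, ∀ b ∈ Agr s, a * b ∈ Agr (t + s))
    (hgr_star : ∀ t : Γ, ∀ a ∈ Agr t, star a ∈ Agr (-t))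
    (hgr_indep : iSupIndep Agr)
    (hgr_dense : Dense (↑(⨆ t, Agr t) : Set A))
    -- with a faithful conditional expectation `E0 = Φ₀` onto the degree-zero subspace `A₀`:
    (E0 : A →ₗ[ℂ] A)
    (hE0mem : ∀ a, E0 a ∈ Agr 0)
    (hE0fix : ∀ a ∈ Agr 0, E0 a = a)
    (hE0t : ∀ t : Γ, t ≠ 0 → ∀ a ∈ Agr t, E0 a = 0)
    (hE0star : ∀ a, E0 (star a) = star (E0 a))
    (hE0contr : ∀ a, ‖E0 a‖ ≤ ‖a‖)
    (hE0pos : ∀ a : A, 0 ≤ a → 0 ≤ E0 a)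
    (hE0bimod : ∀ a : A, ∀ b ∈ Agr 0, E0 (b * a) = b * E0 a ∧ E0 (a * b) = E0 a * b)
    (hE0faith : ∀ a : A, E0 (star a * a) = 0 → a = 0)
    -- `D` is a Cartan subalgebra of `A₀`: a closed abelian *-subalgebra,
    (D : StarSubalgebra ℂ A)
    (hD0 : (D : Set A) ⊆ (Agr 0 : Set A))
    (hDclosed : IsClosed (D : Set A))
    (hDcomm : ∀ d ∈ D, ∀ e ∈ D, d * e = e * d)
    -- maximal abelian in `A₀`,
    (hDmasa : ∀ a ∈ Agr 0, (∀ d ∈ D, a * d = d * a) → a ∈ D)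
    -- containing an approximate unit for `A₀`,
    (hDau : ∃ (ι : Type) (l : Filter ι) (e : ι → A), l.NeBot ∧
      (∀ i, e i ∈ D ∧ 0 ≤ e i ∧ ‖e i‖ ≤ 1) ∧
      ∀ a ∈ Agr 0, Filter.Tendsto (fun i => e i * a) l (nhds a) ∧
        Filter.Tendsto (fun i => a * e i) l (nhds a))
    -- whose normalizers in `A₀` generate `A₀`,
    (hD0gen : ∀ a ∈ Agr 0, a ∈ closure (↑(Submodule.span ℂ
      {n : A | n ∈ Agr 0 ∧ ∀ d ∈ D, n * d * star n ∈ D ∧ star n * d * n ∈ D}) : Set A))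
    -- with a faithful conditional expectation `ED = E` of `A₀` onto `D`:
    (ED : A →ₗ[ℂ] A)
    (hEDmem : ∀ a, ED a ∈ D)
    (hEDfix : ∀ d ∈ D, ED d = d)
    (hEDstar : ∀ a, ED (star a) = star (ED a))
    (hEDcontr : ∀ a, ‖ED a‖ ≤ ‖a‖)
    (hEDpos : ∀ a : A, 0 ≤ a → 0 ≤ ED a)
    (hEDbimod : ∀ a : A, ∀ d ∈ D, ED (d * a) = d * ED a ∧ ED (a * d) = ED a * d)
    (hEDfaith : ∀ a ∈ Agr 0, ED (star a * a) = 0 → a = 0)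
    -- and the normalizers `N(A,D)` of `D` in `A` densely span `A`:
    (hNdense : Dense (↑(Submodule.span ℂ
      {n : A | ∀ d ∈ D, n * d * star n ∈ D ∧ star n * d * n ∈ D}) : Set A))
    -- `X = D̂` is the Gelfand spectrum of `D`, realized via the evaluation map `ev`:
    {X : Type*} [TopologicalSpace X] [T2Space X] [LocallyCompactSpace X]
    (ev : X → A → ℂ)
    (hev_cont : ∀ d ∈ D, Continuous fun x : X => ev x d)
    (hev_add : ∀ (x : X), ∀ d ∈ D, ∀ e ∈ D, ev x (d + e) = ev x d + ev x e)
    (hev_smul : ∀ (x : X) (c : ℂ), ∀ d ∈ D, ev x (c • d) = c * ev x d)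
    (hev_mul : ∀ (x : X), ∀ d ∈ D, ∀ e ∈ D, ev x (d * e) = ev x d * ev x e)
    (hev_star : ∀ (x : X), ∀ d ∈ D, ev x (star d) = starRingEnd ℂ (ev x d))
    (hev_sep : ∀ d ∈ D, (∀ x : X, ev x d = 0) → d = 0)
    (hev_ne : ∀ x : X, ∃ d ∈ D, ev x d ≠ 0)
    (hev_inj : ∀ x y : X, (∀ d ∈ D, ev x d = ev y d) → x = y)
    (hev_full : ∀ φ : A → ℂ, (∃ d ∈ D, φ d ≠ 0) →
      (∀ d ∈ D, ∀ e ∈ D, φ (d * e) = φ d * φ e) →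
      (∀ d ∈ D, ∀ e ∈ D, φ (d + e) = φ d + φ e) →
      (∀ (c : ℂ), ∀ d ∈ D, φ (c • d) = c * φ d) →
      (∀ d ∈ D, ‖φ d‖ ≤ ‖d‖) → ∃ x : X, ∀ d ∈ D, φ d = ev x d)
    (hev_top : Topology.IsInducing fun x : X => (fun d : D => ev x ↑d))
    -- `n` and `n′` are homogeneous normalizers of `D`:
    (n : A) (t : Γ) (hnt : n ∈ Agr t)
    (hn : ∀ d ∈ D, n * d * star n ∈ D ∧ star n * d * n ∈ D)
    (n' : A) (t' : Γ) (hnt' : n' ∈ Agr t')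
    (hn' : ∀ d ∈ D, n' * d * star n' ∈ D ∧ star n' * d * n' ∈ D)
    -- `(n,x)` and `(n′,x)` lie in `𝒢`:
    (x : X)
    (hxn : ev x (star n * n) ≠ 0) (hxn' : ev x (star n' * n') ≠ 0) :
    -- `∼_Σ` coincides with `≈_Σ` …
    ((∃ d ∈ D, ∃ d' ∈ D,
        IsCompact (closure {y : X | ev y d ≠ 0}) ∧
        IsCompact (closure {y : X | ev y d' ≠ 0}) ∧
        (∃ r : ℝ, 0 < r ∧ ev x d = r) ∧ (∃ r : ℝ, 0 < r ∧ ev x d' = r) ∧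
        n * d = n' * d') ↔
      (∃ r : ℝ, 0 < r ∧ ev x (ED (E0 (star n * n'))) = r)) ∧
    -- … and `∼_G` coincides with `≈_G`:
    ((∃ d ∈ D, ∃ d' ∈ D,
        IsCompact (closure {y : X | ev y d ≠ 0}) ∧
        IsCompact (closure {y : X | ev y d' ≠ 0}) ∧
        ev x d ≠ 0 ∧ ev x d' ≠ 0 ∧
        n * d = n' * d') ↔
      ev x (ED (E0 (star n * n'))) ≠ 0) := by
    classical
  letI _cstar : CStarAlgebra A := { }
  obtain ⟨ι, l, eu, hlne, heu, hau⟩ := hDau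
  haveI := hlne
  have hDin0 : ∀ p : A, p ∈ D → p ∈ Agr 0 := fun p hp => hD0 hp
  have hmul0 : ∀ a ∈ Agr 0, ∀ b ∈ Agr 0, a * b ∈ Agr 0 := by
    intro a ha b hb
    have := hgr_mul 0 0 a ha b hb
    rwa [add_zero] at this
  -- basic facts about the characters `ev y`
  have ev_one : ∀ y : X, ev y 1 = 1 := by
    intro y
    obtain ⟨d₀, hd₀, hne⟩ := hev_ne y
    have h1 := hev_mul y d₀ hd₀ 1 (one_mem D)
    rw [mul_one] at h1
    have h2 : ev y d₀ * 1 = ev y d₀ * ev y 1 := by rw [mul_one]; exact h1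
    exact (mul_left_cancel₀ hne h2).symm
  have ev_neg : ∀ (y : X), ∀ p ∈ D, ev y (-p) = - ev y p := by
    intro y p hp
    have := hev_smul y (-1) p hp
    rwa [neg_one_smul, neg_one_mul] at this
  have ev_sub : ∀ (y : X), ∀ p ∈ D, ∀ q ∈ D, ev y (p - q) = ev y p - ev y q := by
    intro y p hp q hq
    rw [sub_eq_add_neg, hev_add y p hp (-q) (neg_mem hq), ev_neg y q hq, ← sub_eq_add_neg]
  have ev_zero : ∀ y : X, ev y (0 : A) = 0 := by
    intro y
    have := ev_sub y 1 (one_mem D) 1 (one_mem D)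
    rwa [sub_self, sub_self] at this
  have ev_bound : ∀ (y : X), ∀ p ∈ D, ‖ev y p‖ ≤ ‖p‖ := by
    intro y p hp
    exact gamma_cartan_char_bound D hDclosed (ev y) (hev_add y) (fun c => hev_smul y c)
      (hev_mul y) hp
  have ev_real : ∀ (y : X), ∀ p ∈ D, IsSelfAdjoint p → ∃ r : ℝ, ev y p = r := by
    intro y p hp hsa
    apply Complex.conj_eq_iff_real.mp
    have := hev_star y p hp
    rw [hsa.star_eq] at this
    exact this.symm
  -- positivity of the characters `ev y`
  have evPos : ∀ (y : X), ∀ p ∈ D, 0 ≤ p → ∃ r : ℝ, 0 ≤ r ∧ ev y p = r := by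
    intro y p hp hpos
    obtain ⟨r, hr⟩ := ev_real y p hp (IsSelfAdjoint.of_nonneg hpos)
    refine ⟨r, ?_, hr⟩
    have hspec : (r : ℂ) ∈ spectrum ℂ (((⟨p, hp⟩ : D) : A)) := by
      rw [← StarSubalgebra.spectrum_eq (hS := hDclosed) (a := (⟨p, hp⟩ : D))]
      by_contra hns
      have hunit : IsUnit (algebraMap ℂ D (r : ℂ) - ⟨p, hp⟩) := spectrum.notMem_iff.mp hns
      obtain ⟨u, hu⟩ := hunit
      have h1 : (↑u⁻¹ : D) * (algebraMap ℂ D (r : ℂ) - ⟨p, hp⟩) = 1 := by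
        rw [← hu]; exact u.inv_mul
      have h1A : ((↑u⁻¹ : D) : A) * (((algebraMap ℂ D (r : ℂ) - ⟨p, hp⟩) : D) : A) = 1 := by
        have := congrArg (fun z : D => (z : A)) h1
        simpa using this
      have hq2 : (((algebraMap ℂ D (r : ℂ) - ⟨p, hp⟩) : D) : A) = (r : ℂ) • (1 : A) - p := by
        push_cast
        rw [Algebra.algebraMap_eq_smul_one]
      have hq2D : ((r : ℂ) • (1 : A) - p) ∈ D := sub_mem (D.smul_mem (one_mem D) _) hp
      have hev2 : ev y ((r : ℂ) • (1 : A) - p) = 0 := by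
        rw [ev_sub y _ (D.smul_mem (one_mem D) _) _ hp, hev_smul y _ _ (one_mem D), ev_one,
          mul_one, hr, sub_self]
      have hev1 : ev y (((↑u⁻¹ : D) : A) * ((r : ℂ) • (1 : A) - p)) = 1 := by
        rw [← hq2, h1A, ev_one]
      rw [hev_mul y _ (SetLike.coe_mem _) _ hq2D, hev2, mul_zero] at hev1
      exact zero_ne_one hev1
    have hspec' : (r : ℂ) ∈ spectrum ℂ p := hspec
    have hrspec : r ∈ spectrum ℝ p := by
      have : algebraMap ℝ ℂ r ∈ spectrum ℂ p := by
        simpa using hspec'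
      exact (spectrum.algebraMap_mem_iff ℂ).mp this
    exact spectrum_nonneg_of_nonneg hpos hrspec
  -- `X` is compact
  haveI hXcomp : CompactSpace X := by
    set e : X → (D → ℂ) := fun y => fun d : D => ev y (d : A) with he_def
    have he_inj : Function.Injective e := by
      intro y z h
      apply hev_inj
      intro d hd
      exact congrFun h ⟨d, hd⟩
    have hrange : Set.range e = {f : D → ℂ |
        (∀ d e' : D, f (d * e') = f d * f e') ∧
        (∀ d e' : D, f (d + e') = f d + f e') ∧
        (∀ (c : ℂ) (d : D), f (c • d) = c * f d) ∧
        (∀ d : D, ‖f d‖ ≤ ‖(d : A)‖) ∧ f 1 = 1} := by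
      apply Set.eq_of_subset_of_subset
      · rintro f ⟨y, rfl⟩
        refine ⟨?_, ?_, ?_, ?_, ?_⟩
        · intro d e'
          simpa [he_def] using hev_mul y d d.2 e' e'.2
        · intro d e'
          simpa [he_def] using hev_add y d d.2 e' e'.2
        · intro c d
          simpa [he_def] using hev_smul y c d d.2
        · intro d
          simpa [he_def] using ev_bound y d d.2
        · simpa [he_def] using ev_one y
      · rintro f ⟨hfm, hfa, hfs, hfb, hf1⟩
        set φ : A → ℂ := fun a => if h : a ∈ D then f ⟨a, h⟩ else 0 with hφ_def
        have hφD : ∀ (p : A) (hp : p ∈ D), φ p = f ⟨p, hp⟩ := by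
          intro p hp; simp only [hφ_def, dif_pos hp]
        obtain ⟨y, hy⟩ := hev_full φ
          ⟨1, one_mem D, by
            rw [hφD 1 (one_mem D), show ((⟨(1:A), one_mem D⟩ : D)) = 1 from rfl, hf1]
            exact one_ne_zero⟩
          (fun p hp q hq => by
            rw [hφD _ (mul_mem hp hq), hφD _ hp, hφD _ hq]
            exact hfm ⟨p, hp⟩ ⟨q, hq⟩)
          (fun p hp q hq => by
            rw [hφD _ (add_mem hp hq), hφD _ hp, hφD _ hq]
            exact hfa ⟨p, hp⟩ ⟨q, hq⟩)
          (fun c p hp => by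
            rw [hφD _ (D.smul_mem hp c), hφD _ hp]
            exact hfs c ⟨p, hp⟩)
          (fun p hp => by rw [hφD _ hp]; exact hfb ⟨p, hp⟩)
        refine ⟨y, ?_⟩
        funext d
        have h3 := (hy d d.2).symm.trans (hφD d d.2)
        simpa [he_def] using h3
    have hcl : IsClosed (Set.range e) := by
      rw [hrange]
      simp only [Set.setOf_and]
      refine IsClosed.inter ?_ (IsClosed.inter ?_ (IsClosed.inter ?_ (IsClosed.inter ?_ ?_)))
      · rw [Set.setOf_forall]
        refine isClosed_iInter fun d => ?_
        rw [Set.setOf_forall]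
        refine isClosed_iInter fun e' => ?_
        exact isClosed_eq (continuous_apply _) ((continuous_apply d).mul (continuous_apply e'))
      · rw [Set.setOf_forall]
        refine isClosed_iInter fun d => ?_
        rw [Set.setOf_forall]
        refine isClosed_iInter fun e' => ?_
        exact isClosed_eq (continuous_apply _) ((continuous_apply d).add (continuous_apply e'))
      · rw [Set.setOf_forall]
        refine isClosed_iInter fun c => ?_
        rw [Set.setOf_forall]
        refine isClosed_iInter fun d => ?_
        exact isClosed_eq (continuous_apply _) (continuous_const.mul (continuous_apply d))
      · rw [Set.setOf_forall]
        refine isClosed_iInter fun d => ?_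
        exact isClosed_le ((continuous_apply d).norm) continuous_const
      · exact isClosed_eq (continuous_apply 1) continuous_const
    have hsub : Set.range e ⊆ Set.pi Set.univ (fun d : D => Metric.closedBall (0:ℂ) ‖(d:A)‖) := by
      rintro f ⟨y, rfl⟩ d _
      simpa [he_def, Metric.mem_closedBall, dist_zero_right] using ev_bound y d d.2
    have hPcomp : IsCompact (Set.pi Set.univ fun d : D => Metric.closedBall (0:ℂ) ‖(d:A)‖) :=
      isCompact_univ_pi fun d => isCompact_closedBall _ _
    have hrc : IsCompact (Set.range e) := hPcomp.of_isClosed_subset hcl hsub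
    have hemb : Topology.IsEmbedding e := ⟨hev_top, he_inj⟩
    haveI : CompactSpace (Set.range e) := isCompact_iff_compactSpace.mp hrc
    exact hemb.toHomeomorph.symm.compactSpace
  have hclosure_comp : ∀ s : Set X, IsCompact (closure s) := fun s => isClosed_closure.isCompact
  -- approximate unit limits
  have heuD : ∀ i, eu i ∈ D := fun i => (heu i).1
  have heu_star : ∀ i, star (eu i) = eu i := fun i => (IsSelfAdjoint.of_nonneg (heu i).2.1).star_eq
  have hmul_e : ∀ (a : A) (t0 : Γ), a ∈ Agr t0 → Tendsto (fun i => a * eu i) l (nhds a) := by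
    intro a t0 ha
    have hc0 : star a * a ∈ Agr 0 := by
      have := hgr_mul t0 (-t0) (star a) (hgr_star t0 a ha) a ha
      rwa [neg_add_cancel] at this
    have h2 : Tendsto (fun i => 2 * ‖(star a * a) * eu i - (star a * a)‖) l (nhds 0) := by
      have h0 : Tendsto (fun i => (star a * a) * eu i - (star a * a)) l (nhds 0) := by
        have := ((hau (star a * a) hc0).2).sub_const (star a * a)
        rwa [sub_self] at this
      have h0' := h0.norm
      rw [norm_zero] at h0'
      simpa using h0'.const_mul 2
    have hsq : Tendsto (fun i => Real.sqrt (2 * ‖(star a * a) * eu i - (star a * a)‖)) l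
        (nhds 0) := by
      have hc := (Real.continuous_sqrt.tendsto 0).comp h2
      simpa only [Function.comp_def, Real.sqrt_zero] using hc
    rw [tendsto_iff_norm_sub_tendsto_zero]
    refine squeeze_zero (fun i => norm_nonneg _) (fun i => ?_) hsq
    have hbd : ‖a * eu i - a‖ ^ 2 ≤ 2 * ‖(star a * a) * eu i - (star a * a)‖ := by
      have hexp : star (a * eu i - a) * (a * eu i - a)
          = eu i * ((star a * a) * eu i - (star a * a)) - ((star a * a) * eu i - (star a * a)) := by
        rw [star_sub, star_mul, heu_star i]
        noncomm_ring
      have hn1 : ‖a * eu i - a‖ ^ 2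
          = ‖eu i * ((star a * a) * eu i - (star a * a)) - ((star a * a) * eu i - (star a * a))‖ := by
        rw [← hexp, CStarRing.norm_star_mul_self]
        ring
      rw [hn1]
      calc ‖eu i * ((star a * a) * eu i - (star a * a)) - ((star a * a) * eu i - (star a * a))‖
          ≤ ‖eu i * ((star a * a) * eu i - (star a * a))‖ + ‖(star a * a) * eu i - (star a * a)‖ :=
            norm_sub_le _ _
        _ ≤ ‖eu i‖ * ‖(star a * a) * eu i - (star a * a)‖ + ‖(star a * a) * eu i - (star a * a)‖ := by
            gcongr
            exact norm_mul_le _ _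
        _ ≤ 1 * ‖(star a * a) * eu i - (star a * a)‖ + ‖(star a * a) * eu i - (star a * a)‖ := by
            gcongr
            exact (heu i).2.2
        _ = 2 * ‖(star a * a) * eu i - (star a * a)‖ := by ring
    calc ‖a * eu i - a‖ = Real.sqrt (‖a * eu i - a‖ ^ 2) := by
          rw [Real.sqrt_sq (norm_nonneg _)]
      _ ≤ Real.sqrt (2 * ‖(star a * a) * eu i - (star a * a)‖) := Real.sqrt_le_sqrt hbd
  have h_e_mul : ∀ (a : A) (t0 : Γ), a ∈ Agr t0 → Tendsto (fun i => eu i * a) l (nhds a) := by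
    intro a t0 ha
    have h1 := hmul_e (star a) (-t0) (hgr_star t0 a ha)
    have h2 : Tendsto (fun i => star (star a * eu i)) l (nhds (star (star a))) :=
      (continuous_star.tendsto _).comp h1
    rw [star_star] at h2
    refine h2.congr fun i => ?_
    rw [star_mul, heu_star i, star_star]
  -- products of homogeneous normalizers with their adjoints lie in `D`
  have hFactA : ∀ (m : A) (t0 : Γ), m ∈ Agr t0 →
      (∀ p ∈ D, m * p * star m ∈ D ∧ star m * p * m ∈ D) →
      star m * m ∈ D ∧ m * star m ∈ D := by
    intro m t0 hm hnorm
    constructor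
    · have hT : Tendsto (fun i => star m * (eu i * m)) l (nhds (star m * m)) :=
        (h_e_mul m t0 hm).const_mul (star m)
      refine hDclosed.mem_of_tendsto hT (Eventually.of_forall fun i => ?_)
      have hrw : star m * (eu i * m) = star m * eu i * m := by rw [mul_assoc]
      rw [hrw]
      exact (hnorm (eu i) (heuD i)).2
    · have hT : Tendsto (fun i => m * eu i * star m) l (nhds (m * star m)) :=
        (hmul_e m t0 hm).mul_const (star m)
      refine hDclosed.mem_of_tendsto hT (Eventually.of_forall fun i => ?_)
      exact (hnorm (eu i) (heuD i)).1
  have hgD : star n * n ∈ D := (hFactA n t hnt hn).1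
  have hg2D : n * star n ∈ D := (hFactA n t hnt hn).2
  have hg'D : star n' * n' ∈ D := (hFactA n' t' hnt' hn').1
  have hg2'D : n' * star n' ∈ D := (hFactA n' t' hnt' hn').2
  -- expectation facts
  have hE0r : ∀ (a : A), ∀ p ∈ D, E0 (a * p) = E0 a * p := fun a p hp =>
    (hE0bimod a p (hDin0 p hp)).2
  have hEDr : ∀ (a : A), ∀ p ∈ D, ED (a * p) = ED a * p := fun a p hp => (hEDbimod a p hp).2
  have hEDlft : ∀ (a : A), ∀ p ∈ D, ED (p * a) = p * ED a := fun a p hp => (hEDbimod a p hp).1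
  have hDfix : ∀ p ∈ D, ED (E0 p) = p := fun p hp => by
    rw [hE0fix p (hDin0 p hp), hEDfix p hp]
  -- the forward computation
  have hforward : ∀ d₀ ∈ D, ∀ d₀' ∈ D, n * d₀ = n' * d₀' →
      ED (E0 (star n * n')) * d₀' = (star n * n) * d₀ := by
    intro d₀ h₀ d₀' h₀' heq
    calc ED (E0 (star n * n')) * d₀' = ED (E0 (star n * n') * d₀') := (hEDr _ _ h₀').symm
      _ = ED (E0 ((star n * n') * d₀')) := by rw [hE0r _ _ h₀']
      _ = ED (E0 (star n * (n' * d₀'))) := by rw [mul_assoc]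
      _ = ED (E0 (star n * (n * d₀))) := by rw [← heq]
      _ = ED (E0 ((star n * n) * d₀)) := by rw [mul_assoc]
      _ = (star n * n) * d₀ := hDfix _ (mul_mem hgD h₀)
  by_cases ht : t' = t
  · -- main case
    have ht2 : t = t' := ht.symm
    clear ht
    subst ht2
    set v : A := star n * n' with hv_def
    have hv0 : v ∈ Agr 0 := by
      have := hgr_mul t (-t) (star n) (hgr_star t n hnt) n' hnt'
      rwa [neg_add_cancel] at this
    have hvs0 : star v ∈ Agr 0 := by
      have := hgr_star 0 v hv0
      rwa [neg_zero] at this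
    have hE0v : E0 v = v := hE0fix v hv0
    set b : A := ED (E0 v) with hb_def
    have hbD : b ∈ D := hEDmem _
    have hEDv : ED v = b := by rw [hb_def, hE0v]
    set β : A := star b * b with hβ_def
    have hβD : β ∈ D := mul_mem (star_mem hbD) hbD
    set Gv : A := star v * v with hGv_def
    set G'v : A := v * star v with hG'v_def
    have hvnorm : ∀ p ∈ D, v * p * star v ∈ D ∧ star v * p * v ∈ D := by
      intro p hp
      constructor
      · have hq : v * p * star v = star n * (n' * p * star n') * n := by
          simp only [hv_def, star_mul, star_star, mul_assoc]
        rw [hq]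
        exact (hn _ (hn' p hp).1).2
      · have hq : star v * p * v = star n' * (n * p * star n) * n' := by
          simp only [hv_def, star_mul, star_star, mul_assoc]
        rw [hq]
        exact (hn' _ (hn p hp).1).2
    have hGvD : Gv ∈ D := by
      have hq : Gv = star n' * (n * star n) * n' := by
        simp only [hGv_def, hv_def, star_mul, star_star, mul_assoc]
      rw [hq]
      exact (hn' _ hg2D).2
    have hG'vD : G'v ∈ D := by
      have hq : G'v = star n * (n' * star n') * n := by
        simp only [hG'v_def, hv_def, star_mul, star_star, mul_assoc]
      rw [hq]
      exact (hn _ hg2'D).2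
    -- the general Renault-type lemma
    have hP1 : ∀ w : A, w ∈ Agr 0 →
        (∀ p ∈ D, w * p * star w ∈ D ∧ star w * p * w ∈ D) →
        ∀ p ∈ D, (w * p * star w) * (star (ED w) * ED w)
          = (p * (star w * w)) * (star (ED w) * ED w) := by
      intro w hw0 hwn p hp
      have hbwD : ED w ∈ D := hEDmem w
      have hGww : star w * w ∈ D := by
        have hT : Tendsto (fun i => star w * (eu i * w)) l (nhds (star w * w)) :=
          ((hau w hw0).1).const_mul (star w)
        refine hDclosed.mem_of_tendsto hT (Eventually.of_forall fun i => ?_)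
        have hrw : star w * (eu i * w) = star w * eu i * w := by rw [mul_assoc]
        rw [hrw]
        exact (hwn (eu i) (heuD i)).2
      have hA1 : ∀ q ∈ D, q * (ED w * (q * (star w * w))) = (q * (w * q * star w)) * ED w := by
        intro q hq
        have he : q * (w * (q * (star w * w))) = (q * (w * q * star w)) * w := by
          simp only [mul_assoc]
        calc q * (ED w * (q * (star w * w)))
            = ED (q * (w * (q * (star w * w)))) := by
              rw [hEDlft (w * (q * (star w * w))) q hq,
                hEDr w (q * (star w * w)) (mul_mem hq hGww)]
          _ = ED ((q * (w * q * star w)) * w) := by rw [he]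
          _ = (q * (w * q * star w)) * ED w := hEDlft w _ (mul_mem hq (hwn q hq).1)
      have hmemL : (w * p * star w) * (star (ED w) * ED w) ∈ D :=
        mul_mem (hwn p hp).1 (mul_mem (star_mem hbwD) hbwD)
      have hmemR : (p * (star w * w)) * (star (ED w) * ED w) ∈ D :=
        mul_mem (mul_mem hp hGww) (mul_mem (star_mem hbwD) hbwD)
      have hzero : ∀ y : X,
          ev y ((w * p * star w) * (star (ED w) * ED w)
            - (p * (star w * w)) * (star (ED w) * ED w)) = 0 := by
        intro y
        rw [ev_sub y _ hmemL _ hmemR]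
        have hβval : ev y (star (ED w) * ED w) = (starRingEnd ℂ) (ev y (ED w)) * ev y (ED w) := by
          rw [hev_mul y _ (star_mem hbwD) _ hbwD, hev_star y _ hbwD]
        rw [hev_mul y _ (hwn p hp).1 _ (mul_mem (star_mem hbwD) hbwD),
            hev_mul y _ (mul_mem hp hGww) _ (mul_mem (star_mem hbwD) hbwD),
            hev_mul y _ hp _ hGww, hβval]
        rcases eq_or_ne (ev y (ED w)) 0 with hB | hB
        · rw [hB]
          simp
        · obtain ⟨e₀, he₀D, he₀⟩ := hev_ne y
          set e₁ : A := (ev y e₀)⁻¹ • e₀ with he₁_def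
          have he₁D : e₁ ∈ D := D.smul_mem he₀D _
          have he₁ : ev y e₁ = 1 := by
            rw [he₁_def, hev_smul y _ _ he₀D, inv_mul_cancel₀ he₀]
          have hinst : ∀ q ∈ D,
              ev y q * ev y q * ev y (star w * w) = ev y q * ev y (w * q * star w) := by
            intro q hq
            have h0 := congrArg (ev y) (hA1 q hq)
            rw [hev_mul y _ hq _ (mul_mem hbwD (mul_mem hq hGww)),
                hev_mul y _ hbwD _ (mul_mem hq hGww),
                hev_mul y _ hq _ hGww,
                hev_mul y _ (mul_mem hq (hwn q hq).1) _ hbwD,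
                hev_mul y _ hq _ (hwn q hq).1] at h0
            have h0' : ev y (ED w) * (ev y q * ev y q * ev y (star w * w))
                = ev y (ED w) * (ev y q * ev y (w * q * star w)) := by
              linear_combination h0
            exact mul_left_cancel₀ hB h0'
          have hp_eq := hinst p hp
          have he_eq := hinst e₁ he₁D
          have hpe_eq := hinst (p + e₁) (add_mem hp he₁D)
          rw [hev_add y _ hp _ he₁D, he₁] at hpe_eq
          have hadd_elt : w * (p + e₁) * star w = w * p * star w + w * e₁ * star w := by
            rw [mul_add, add_mul]
          rw [hadd_elt, hev_add y _ (hwn p hp).1 _ (hwn e₁ he₁D).1] at hpe_eq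
          rw [he₁] at he_eq
          have hfin : ev y (w * p * star w) = ev y p * ev y (star w * w) := by
            linear_combination hp_eq + (1 + ev y p) * he_eq - hpe_eq
          rw [hfin]
          ring
      have := hev_sep _ (sub_mem hmemL hmemR) hzero
      exact sub_eq_zero.mp this
    -- instantiations of the lemma
    have hvstarnorm : ∀ p ∈ D, star v * p * star (star v) ∈ D ∧ star (star v) * p * star v ∈ D := by
      intro p hp
      rw [star_star]
      exact ⟨(hvnorm p hp).2, (hvnorm p hp).1⟩
    have hβswap : b * star b = star b * b := hDcomm b hbD (star b) (star_mem hbD)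
    have hP1v : ∀ p ∈ D, (v * p * star v) * β = (p * Gv) * β := by
      intro p hp
      have h := hP1 v hv0 hvnorm p hp
      rwa [hEDv, ← hβ_def, ← hGv_def] at h
    have hP1v' : ∀ p ∈ D, (star v * p * v) * β = (p * G'v) * β := by
      intro p hp
      have h := hP1 (star v) hvs0 hvstarnorm p hp
      rw [star_star, hEDstar, hEDv, star_star] at h
      rwa [hβswap, ← hβ_def, ← hG'v_def] at h
    have hB1v : ∀ p ∈ D, v * (star v * p * v) = p * (v * Gv) := by
      intro p hp
      have h := hDcomm _ hG'vD p hp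
      calc v * (star v * p * v) = (G'v * p) * v := by
            simp only [hG'v_def, mul_assoc]
        _ = (p * G'v) * v := by rw [h]
        _ = p * (v * Gv) := by simp only [hG'v_def, hGv_def, mul_assoc]
    have hB1v' : ∀ p ∈ D, star v * (v * p * star v) = p * (star v * G'v) := by
      intro p hp
      have h := hDcomm _ hGvD p hp
      calc star v * (v * p * star v) = (Gv * p) * star v := by
            simp only [hGv_def, mul_assoc]
        _ = (p * Gv) * star v := by rw [h]
        _ = p * (star v * G'v) := by simp only [hGv_def, hG'v_def, mul_assoc]
    have hstar1 : ∀ p ∈ D, p * (v * (Gv * β)) = v * (p * (G'v * β)) := by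
      intro p hp
      calc p * (v * (Gv * β)) = (p * (v * Gv)) * β := by simp only [mul_assoc]
        _ = (v * (star v * p * v)) * β := by rw [hB1v p hp]
        _ = v * ((star v * p * v) * β) := by simp only [mul_assoc]
        _ = v * ((p * G'v) * β) := by rw [hP1v' p hp]
        _ = v * (p * (G'v * β)) := by simp only [mul_assoc]
    have hstar2 : ∀ p ∈ D, p * (star v * (G'v * β)) = star v * (p * (Gv * β)) := by
      intro p hp
      calc p * (star v * (G'v * β)) = (p * (star v * G'v)) * β := by simp only [mul_assoc]
        _ = (star v * (v * p * star v)) * β := by rw [hB1v' p hp]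
        _ = star v * ((v * p * star v) * β) := by simp only [mul_assoc]
        _ = star v * ((p * Gv) * β) := by rw [hP1v p hp]
        _ = star v * (p * (Gv * β)) := by simp only [mul_assoc]
    have hGβD : Gv * β ∈ D := mul_mem hGvD hβD
    have hG'βD : G'v * β ∈ D := mul_mem hG'vD hβD
    have hlim1 : v * (Gv * β) = v * (G'v * β) := by
      have hT1 : Tendsto (fun i => eu i * (v * (Gv * β))) l (nhds (v * (Gv * β))) :=
        (hau _ (hmul0 v hv0 _ (hDin0 _ hGβD))).1
      have hT2 : Tendsto (fun i => v * (eu i * (G'v * β))) l (nhds (v * (G'v * β))) :=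
        ((hau _ (hDin0 _ hG'βD)).1).const_mul v
      refine tendsto_nhds_unique (hT1.congr fun i => ?_) hT2
      exact hstar1 (eu i) (heuD i)
    have hlim2 : star v * (G'v * β) = star v * (Gv * β) := by
      have hT1 : Tendsto (fun i => eu i * (star v * (G'v * β))) l (nhds (star v * (G'v * β))) :=
        (hau _ (hmul0 _ hvs0 _ (hDin0 _ hG'βD))).1
      have hT2 : Tendsto (fun i => star v * (eu i * (Gv * β))) l (nhds (star v * (Gv * β))) :=
        ((hau _ (hDin0 _ hGβD)).1).const_mul (star v)
      refine tendsto_nhds_unique (hT1.congr fun i => ?_) hT2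
      exact hstar2 (eu i) (heuD i)
    have hGG' : Gv * β = G'v * β := by
      have h1 : Gv * (Gv * β) = Gv * (G'v * β) := by
        calc Gv * (Gv * β) = star v * (v * (Gv * β)) := by simp only [hGv_def, mul_assoc]
          _ = star v * (v * (G'v * β)) := by rw [hlim1]
          _ = Gv * (G'v * β) := by simp only [hGv_def, mul_assoc]
      have h2 : G'v * (G'v * β) = G'v * (Gv * β) := by
        calc G'v * (G'v * β) = v * (star v * (G'v * β)) := by simp only [hG'v_def, mul_assoc]
          _ = v * (star v * (Gv * β)) := by rw [hlim2]
          _ = G'v * (Gv * β) := by simp only [hG'v_def, mul_assoc]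
      have hz : ∀ y : X, ev y (Gv * β - G'v * β) = 0 := by
        intro y
        rw [ev_sub y _ hGβD _ hG'βD]
        have e1 := congrArg (ev y) h1
        have e2 := congrArg (ev y) h2
        rw [hev_mul y _ hGvD _ hGβD, hev_mul y _ hGvD _ hG'βD] at e1
        rw [hev_mul y _ hG'vD _ hG'βD, hev_mul y _ hG'vD _ hGβD] at e2
        rw [hev_mul y _ hGvD _ hβD] at e1 e2 ⊢
        rw [hev_mul y _ hG'vD _ hβD] at e1 e2 ⊢
        have hsq : (ev y Gv - ev y G'v) * ((ev y Gv - ev y G'v) * ev y β) = 0 := by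
          linear_combination e1 + e2
        rcases mul_eq_zero.mp hsq with h | h
        · rw [sub_eq_zero.mp h]
          ring
        · rcases mul_eq_zero.mp h with h' | h'
          · rw [sub_eq_zero.mp h']
            ring
          · rw [h']
            ring
      have := hev_sep _ (sub_mem hGβD hG'βD) hz
      exact sub_eq_zero.mp this
    have hw0mem : v * (Gv * β) ∈ Agr 0 := hmul0 v hv0 _ (hDin0 _ hGβD)
    have hwD : v * (Gv * β) ∈ D := by
      apply hDmasa _ hw0mem
      intro p hp
      calc v * (Gv * β) * p = v * (p * (Gv * β)) := by
            rw [mul_assoc, hDcomm _ hGβD p hp]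
        _ = v * (p * (G'v * β)) := by rw [hGG']
        _ = p * (v * (Gv * β)) := (hstar1 p hp).symm
    have hKEY : v * (Gv * β) = b * (Gv * β) := by
      have h1 : ED (v * (Gv * β)) = v * (Gv * β) := hEDfix _ hwD
      have h2 : ED (v * (Gv * β)) = b * (Gv * β) := by
        rw [hEDr v _ hGβD, hEDv]
      rw [← h1, h2]
    have hKEY2 : Gv * (Gv * β) = star b * (b * (Gv * β)) := by
      have h1 : Gv * (Gv * β) = star v * (v * (Gv * β)) := by
        simp only [hGv_def, mul_assoc]
      have h2 : star v * (v * (Gv * β)) = star v * (b * (Gv * β)) := by rw [hKEY]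
      have h3 : ED (star v * (b * (Gv * β))) = star b * (b * (Gv * β)) := by
        rw [hEDr (star v) _ (mul_mem hbD hGβD), hEDstar, hEDv]
      have h4 : ED (Gv * (Gv * β)) = Gv * (Gv * β) := hEDfix _ (mul_mem hGvD hGβD)
      calc Gv * (Gv * β) = ED (Gv * (Gv * β)) := h4.symm
        _ = ED (star v * (b * (Gv * β))) := by rw [h1, h2]
        _ = star b * (b * (Gv * β)) := h3
    have hED_uu : ED (star (v - b) * (v - b)) = Gv - β := by
      have hexp : star (v - b) * (v - b)
          = star v * v - star v * b - (star b * v - star b * b) := by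
        rw [star_sub]
        noncomm_ring
      rw [hexp, map_sub, map_sub, map_sub]
      rw [← hGv_def, ← hβ_def, hEDfix _ hGvD, hEDfix _ hβD]
      rw [hEDr (star v) b hbD, hEDstar, hEDv, hEDlft v (star b) (star_mem hbD), hEDv]
      rw [← hβ_def]
      abel
    have hGvβ_pos : 0 ≤ Gv - β := by
      have := hEDpos _ (star_mul_self_nonneg (v - b))
      rwa [hED_uu] at this
    -- the witnesses
    set dd : A := b * (Gv * (β * (star n' * n'))) with hdd_def
    set dd' : A := Gv * (Gv * β) with hdd'_def
    have hddD : dd ∈ D := mul_mem hbD (mul_mem hGvD (mul_mem hβD hg'D))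
    have hdd'D : dd' ∈ D := mul_mem hGvD (mul_mem hGvD hβD)
    have hI1 : n' * Gv = (n * star n) * (n' * (star n' * n')) := by
      have hcomm : (n' * star n') * (n * star n) = (n * star n) * (n' * star n') :=
        hDcomm _ hg2'D _ hg2D
      calc n' * Gv = ((n' * star n') * (n * star n)) * n' := by
            simp only [hGv_def, hv_def, star_mul, star_star, mul_assoc]
        _ = ((n * star n) * (n' * star n')) * n' := by rw [hcomm]
        _ = (n * star n) * (n' * (star n' * n')) := by simp only [mul_assoc]
    have hmain_eq : n * dd = n' * dd' := by
      have hcomm2 : (Gv * β) * (star n' * n') = (star n' * n') * (Gv * β) :=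
        hDcomm _ hGβD _ hg'D
      calc n * dd = (n * (b * (Gv * β))) * (star n' * n') := by
            simp only [hdd_def, mul_assoc]
        _ = (n * (v * (Gv * β))) * (star n' * n') := by rw [← hKEY]
        _ = (n * star n) * (n' * ((Gv * β) * (star n' * n'))) := by
            simp only [hv_def, mul_assoc]
        _ = (n * star n) * (n' * ((star n' * n') * (Gv * β))) := by rw [hcomm2]
        _ = ((n * star n) * (n' * (star n' * n'))) * (Gv * β) := by simp only [mul_assoc]
        _ = (n' * Gv) * (Gv * β) := by rw [← hI1]
        _ = n' * dd' := by simp only [hdd'_def, mul_assoc]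
    -- values at x
    have hevdd : ev x dd = ev x b * (ev x Gv * (ev x β * ev x (star n' * n'))) := by
      rw [hdd_def, hev_mul x _ hbD _ (mul_mem hGvD (mul_mem hβD hg'D)),
          hev_mul x _ hGvD _ (mul_mem hβD hg'D), hev_mul x _ hβD _ hg'D]
    have hevdd' : ev x dd' = ev x Gv * (ev x Gv * ev x β) := by
      rw [hdd'_def, hev_mul x _ hGvD _ (mul_mem hGvD hβD), hev_mul x _ hGvD _ hβD]
    have hevβ : ∀ y : X, ev y β = (starRingEnd ℂ) (ev y b) * ev y b := by
      intro y
      rw [hβ_def, hev_mul y _ (star_mem hbD) _ hbD, hev_star y _ hbD]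
    have hMne' : ev x b ≠ 0 → ev x β ≠ 0 := by
      intro hB
      rw [hevβ x]
      exact mul_ne_zero ((map_ne_zero_iff (starRingEnd ℂ) (RingHom.injective _)).mpr hB) hB
    have hgamma : ev x b ≠ 0 → ev x Gv = ev x β := by
      intro hB
      have hkey2 := congrArg (ev x) hKEY2
      rw [hev_mul x _ hGvD _ (mul_mem hGvD hβD), hev_mul x _ hGvD _ hβD,
          hev_mul x _ (star_mem hbD) _ (mul_mem hbD hGβD),
          hev_mul x _ hbD _ hGβD, hev_mul x _ hGvD _ hβD, hev_star x _ hbD] at hkey2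
      have h6 : ev x Gv * (ev x Gv - ev x β) = 0 := by
        have h5 : ev x β * (ev x Gv * (ev x Gv - ev x β)) = 0 := by
          linear_combination hkey2 - ev x Gv * ev x β * (hevβ x)
        exact (mul_eq_zero.mp h5).resolve_left (hMne' hB)
      rcases mul_eq_zero.mp h6 with h | h
      · exfalso
        obtain ⟨ρ, hρ0, hρ⟩ := evPos x _ (sub_mem hGvD hβD) hGvβ_pos
        rw [ev_sub x _ hGvD _ hβD, h, zero_sub] at hρ
        have hρ' : -((starRingEnd ℂ) (ev x b) * ev x b) = (ρ : ℂ) := by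
          rw [← hevβ x]
          exact hρ
        have hns : (starRingEnd ℂ) (ev x b) * ev x b = ((Complex.normSq (ev x b) : ℝ) : ℂ) := by
          rw [mul_comm, Complex.mul_conj]
        rw [hns] at hρ'
        have hrρ : -(Complex.normSq (ev x b)) = ρ := by exact_mod_cast hρ'
        have hpos := Complex.normSq_pos.mpr hB
        linarith
      · exact sub_eq_zero.mp h
    constructor
    · constructor
      · rintro ⟨d₀, h₀, d₀', h₀', -, -, ⟨r, hr, hrx⟩, ⟨r', hr', hr'x⟩, heq⟩
        have hfd := hforward d₀ h₀ d₀' h₀' heq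
        have h1 := congrArg (ev x) hfd
        rw [hev_mul x _ hbD _ h₀', hev_mul x _ hgD _ h₀, hrx, hr'x] at h1
        obtain ⟨σ, hσ0, hσx⟩ := evPos x _ hgD (star_mul_self_nonneg n)
        have hσne : σ ≠ 0 := by
          intro h
          apply hxn
          rw [hσx, h]
          simp
        have hσpos : 0 < σ := lt_of_le_of_ne hσ0 (Ne.symm hσne)
        rw [hσx] at h1
        have hr'ne : (r' : ℂ) ≠ 0 := by exact_mod_cast hr'.ne'
        refine ⟨σ * r / r', by positivity, ?_⟩
        push_cast
        field_simp
        linear_combination h1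
      · rintro ⟨r₀, hr₀, hbx⟩
        have hB : ev x b ≠ 0 := by
          rw [hbx]
          exact_mod_cast hr₀.ne'
        obtain ⟨s, hs0, hsx⟩ := evPos x _ hg'D (star_mul_self_nonneg n')
        have hs_ne : s ≠ 0 := by
          intro h
          apply hxn'
          rw [hsx, h]
          simp
        have hs_pos : 0 < s := lt_of_le_of_ne hs0 (Ne.symm hs_ne)
        have hMx : ev x β = ((r₀ * r₀ : ℝ) : ℂ) := by
          rw [hevβ x, hbx, Complex.conj_ofReal]
          push_cast
          ring
        refine ⟨dd, hddD, dd', hdd'D, hclosure_comp _, hclosure_comp _,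
          ⟨r₀ * ((r₀ * r₀) * ((r₀ * r₀) * s)), by positivity, ?_⟩,
          ⟨(r₀ * r₀) * ((r₀ * r₀) * (r₀ * r₀)), by positivity, ?_⟩, hmain_eq⟩
        · rw [hevdd, hgamma hB, hMx, hsx, hbx]
          push_cast
          ring
        · rw [hevdd', hgamma hB, hMx]
          push_cast
          ring
    · constructor
      · rintro ⟨d₀, h₀, d₀', h₀', -, -, hne₀, hne₀', heq⟩
        have hfd := hforward d₀ h₀ d₀' h₀' heq
        have h1 := congrArg (ev x) hfd
        rw [hev_mul x _ hbD _ h₀', hev_mul x _ hgD _ h₀] at h1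
        intro h0
        rw [h0, zero_mul] at h1
        exact (mul_ne_zero hxn hne₀) h1.symm
      · intro hB
        refine ⟨dd, hddD, dd', hdd'D, hclosure_comp _, hclosure_comp _, ?_, ?_, hmain_eq⟩
        · rw [hevdd, hgamma hB]
          exact mul_ne_zero hB (mul_ne_zero (hMne' hB) (mul_ne_zero (hMne' hB) hxn'))
        · rw [hevdd', hgamma hB]
          exact mul_ne_zero (hMne' hB) (mul_ne_zero (hMne' hB) (hMne' hB))
  · -- degenerate case: the degrees differ, everything is zero/false
    have hb0 : ED (E0 (star n * n')) = 0 := by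
      have hvmem : star n * n' ∈ Agr (-t + t') :=
        hgr_mul t' (-t) (star n) (hgr_star t n hnt) n' hnt'
      have hne0 : -t + t' ≠ 0 := by
        intro h
        exact ht (neg_add_eq_zero.mp h).symm
      rw [hE0t _ hne0 _ hvmem, map_zero]
    have hevb0 : ev x (ED (E0 (star n * n'))) = 0 := by rw [hb0]; exact ev_zero x
    have hnoSim : ∀ d₀ ∈ D, ∀ d₀' ∈ D, n * d₀ = n' * d₀' → ev x d₀ ≠ 0 → False := by
      intro d₀ h₀ d₀' h₀' heq hne
      have hfd := hforward d₀ h₀ d₀' h₀' heq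
      have h1 := congrArg (ev x) hfd
      rw [hev_mul x _ (hEDmem _) _ h₀', hev_mul x _ hgD _ h₀, hevb0, zero_mul] at h1
      exact (mul_ne_zero hxn hne) h1.symm
    constructor
    · constructor
      · rintro ⟨d₀, h₀, d₀', h₀', -, -, ⟨r, hr, hrx⟩, -, heq⟩
        exact absurd (hnoSim d₀ h₀ d₀' h₀' heq (by rw [hrx]; exact_mod_cast hr.ne')) id
      · rintro ⟨r, hr, hrx⟩
        rw [hevb0] at hrx
        exact absurd (by exact_mod_cast hrx.symm : r = 0) hr.ne'
    · constructor
      · rintro ⟨d₀, h₀, d₀', h₀', -, -, hne₀, -, heq⟩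
        exact absurd (hnoSim d₀ h₀ d₀' h₀' heq hne₀) id
      · intro hne
        exact absurd hevb0 hne
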